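/- Let p ≥ 11 be a prime number and let c(n) denote the coefficients of the q-expansion of η(pτ)^p/η(τ). Then there do not exist a nonzero constant a ∈ ℂ and multiplicative arithmetic functions M, N : ℕ → ℂ (each equal to 1 at 1 and satisfying f(jk) = f(j)f(k) for coprime j, k) such that c(n) = a·(M(n) − N(n)) for all n ≥ 1. That is, the Dirichlet series L_{Φ_p}(s) = ∑ c(n)n^{−s} admits no decomposition into a difference of two Euler products. -/

import Mathlib

open PowerSeries Filter Topology

/-- The product topology (X-adic topology) on `ℤ⟦X⟧`. -/
noncomputable instance : TopologicalSpace (PowerSeries ℤ) :=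
  inferInstanceAs (TopologicalSpace ((Unit →₀ ℕ) → ℤ))

instance : T2Space (PowerSeries ℤ) :=
  inferInstanceAs (T2Space ((Unit →₀ ℕ) → ℤ))


/-- Multiplying by something ≡ 1 mod X^(d+1) does not change coefficient d. -/
lemma coeff_mul_of_dvd (P Q : PowerSeries ℤ) (d : ℕ) (h : (X : PowerSeries ℤ)^(d+1) ∣ Q - 1) :
    PowerSeries.coeff (R := ℤ) d (P * Q) = PowerSeries.coeff (R := ℤ) d P := by
  have hPQ : P * Q = P + P * (Q - 1) := by ring
  rw [hPQ, map_add]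
  have h2 : PowerSeries.coeff (R := ℤ) d (P * (Q - 1)) = 0 :=
    (PowerSeries.X_pow_dvd_iff.mp (h.mul_left P)) d (Nat.lt_succ_self d)
  rw [h2, add_zero]

lemma X_pow_dvd_prod_sub_one {ι : Type*} (S : Finset ι) (f : ι → PowerSeries ℤ) (n : ℕ)
    (h : ∀ i ∈ S, (X : PowerSeries ℤ)^n ∣ f i - 1) :
    (X : PowerSeries ℤ)^n ∣ (∏ i ∈ S, f i) - 1 := by
  induction S using Finset.cons_induction with
  | empty => simp
  | cons a S ha ih =>
      rw [Finset.prod_cons]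
      have key : f a * (∏ i ∈ S, f i) - 1 = f a * ((∏ i ∈ S, f i) - 1) + (f a - 1) := by ring
      rw [key]
      exact dvd_add ((ih (fun i hi => h i (Finset.mem_cons_of_mem hi))).mul_left _)
        (h a (Finset.mem_cons_self a S))

def pn (i : ℕ) : ℕ+ := ⟨i + 1, i.succ_pos⟩

lemma pn_inj : Function.Injective pn := by
  intro a b h
  have h2 : a + 1 = b + 1 := congrArg PNat.val h
  omega

def Efin (d : ℕ) : Finset ℕ+ := (Finset.range d).map ⟨pn, pn_inj⟩

lemma mem_Efin {d : ℕ} {m : ℕ+} : m ∈ Efin d ↔ (m : ℕ) ≤ d := by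
  simp only [Efin, Finset.mem_map, Finset.mem_range, Function.Embedding.coeFn_mk]
  constructor
  · rintro ⟨i, hi, rfl⟩; simpa [pn] using hi
  · intro hm
    have h1 : 1 ≤ (m : ℕ) := m.2
    have hm' : (m : ℕ) ≤ d := hm
    refine ⟨(m : ℕ) - 1, by omega, ?_⟩
    apply Subtype.ext
    show (m : ℕ) - 1 + 1 = (m : ℕ)
    omega

lemma coeff_prod_superset (f : ℕ+ → PowerSeries ℤ)
    (hf : ∀ m : ℕ+, (X : PowerSeries ℤ)^((m : ℕ)) ∣ f m - 1)
    {S : Finset ℕ+} {d : ℕ} (hS : Efin d ⊆ S) :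
    PowerSeries.coeff (R := ℤ) d (∏ m ∈ S, f m) = PowerSeries.coeff (R := ℤ) d (∏ i ∈ Finset.range d, f (pn i)) := by
  rw [← Finset.prod_filter_mul_prod_filter_not S (fun m : ℕ+ => (m : ℕ) ≤ d)]
  rw [coeff_mul_of_dvd]
  · congr 1
    have hfil : S.filter (fun m : ℕ+ => (m : ℕ) ≤ d) = Efin d := by
      ext m
      simp only [Finset.mem_filter, mem_Efin]
      exact ⟨fun h => h.2, fun h => ⟨hS (mem_Efin.mpr h), h⟩⟩
    rw [hfil, Efin, Finset.prod_map]
    rfl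
  · apply X_pow_dvd_prod_sub_one
    intro m hm
    simp only [Finset.mem_filter] at hm
    exact dvd_trans (pow_dvd_pow X (by omega : d + 1 ≤ (m : ℕ))) (hf m)

lemma coeff_tprod (f : ℕ+ → PowerSeries ℤ)
    (hf : ∀ m : ℕ+, (X : PowerSeries ℤ)^((m : ℕ)) ∣ f m - 1) (d : ℕ) :
    PowerSeries.coeff (R := ℤ) d (∏' m : ℕ+, f m) =
      PowerSeries.coeff (R := ℤ) d (∏ i ∈ Finset.range d, f (pn i)) := by
  set L : PowerSeries ℤ :=
    PowerSeries.mk (fun d => PowerSeries.coeff (R := ℤ) d (∏ i ∈ Finset.range d, f (pn i))) with hL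
  have hprod : HasProd f L := by
    rw [HasProd]
    refine tendsto_pi_nhds.mpr ?_
    intro e
    have hdisc : (𝓝 (L e) : Filter ℤ) = pure (L e) := by
      rw [nhds_discrete]
    rw [hdisc, tendsto_pure]
    filter_upwards [eventually_ge_atTop (Efin (e default))] with S hS
    show MvPowerSeries.coeff (R := ℤ) e (∏ m ∈ S, f m) = MvPowerSeries.coeff (R := ℤ) e L
    rw [Finsupp.unique_single e]
    show PowerSeries.coeff (R := ℤ) (e default) (∏ m ∈ S, f m) = PowerSeries.coeff (R := ℤ) (e default) L
    rw [coeff_prod_superset f hf hS, hL, PowerSeries.coeff_mk]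
  rw [hprod.tprod_eq, hL, PowerSeries.coeff_mk]

lemma pn_val (i : ℕ) : (pn i : ℕ) = i + 1 := rfl

lemma pow_fact (a k n : ℕ) (h : k ≤ a) :
    (X : PowerSeries ℤ)^k ∣ (1 - X^a)^n - 1 := by
  have h1 := sub_dvd_pow_sub_pow (1 - (X : PowerSeries ℤ)^a) 1 n
  rw [one_pow] at h1
  have h2 : ((1 : PowerSeries ℤ) - X^a) - 1 = -(X^a) := by ring
  rw [h2, neg_dvd] at h1
  exact (pow_dvd_pow X h).trans h1

lemma hfB : ∀ m : ℕ+, (X : PowerSeries ℤ)^((m : ℕ)) ∣ (1 - X^((m : ℕ))) - 1 := by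
  intro m
  have : ((1 : PowerSeries ℤ) - X^((m:ℕ))) - 1 = -(X^((m:ℕ))) := by ring
  rw [this]
  exact dvd_neg.mpr dvd_rfl

lemma hfA (p : ℕ) (hp : 0 < p) :
    ∀ m : ℕ+, (X : PowerSeries ℤ)^((m : ℕ)) ∣ (1 - X^(p * (m : ℕ)))^p - 1 := fun m =>
  pow_fact _ _ _ (Nat.le_mul_of_pos_left _ hp)

-- coefficients of B up to 3
lemma hb0 : PowerSeries.coeff (R := ℤ) 0 (∏' m : ℕ+, (1 - (X : PowerSeries ℤ)^((m:ℕ)))) = 1 := by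
  rw [coeff_tprod _ hfB]; simp

lemma hb1 : PowerSeries.coeff (R := ℤ) 1 (∏' m : ℕ+, (1 - (X : PowerSeries ℤ)^((m:ℕ)))) = -1 := by
  rw [coeff_tprod _ hfB]
  simp [Finset.prod_range_succ, pn_val]

lemma hb2 : PowerSeries.coeff (R := ℤ) 2 (∏' m : ℕ+, (1 - (X : PowerSeries ℤ)^((m:ℕ)))) = -1 := by
  rw [coeff_tprod _ hfB]
  have he : ∏ i ∈ Finset.range 2, ((1 : PowerSeries ℤ) - X^((pn i : ℕ)))
      = 1 - X - X^2 + X^3 := by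
    simp [Finset.prod_range_succ, pn_val]; ring
  rw [he]
  simp [coeff_one, coeff_X, coeff_X_pow, map_sub, map_add]

lemma hb3 : PowerSeries.coeff (R := ℤ) 3 (∏' m : ℕ+, (1 - (X : PowerSeries ℤ)^((m:ℕ)))) = 0 := by
  rw [coeff_tprod _ hfB]
  have he : ∏ i ∈ Finset.range 3, ((1 : PowerSeries ℤ) - X^((pn i : ℕ)))
      = 1 - X - X^2 + X^4 + X^5 - X^6 := by
    simp [Finset.prod_range_succ, pn_val]; ring
  rw [he]
  simp [coeff_one, coeff_X, coeff_X_pow, map_sub, map_add]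

lemma coeffA (p : ℕ) (hp11 : 11 ≤ p) (d : ℕ) (hd : d ≤ 3) :
    PowerSeries.coeff (R := ℤ) d (∏' m : ℕ+, (1 - (X : PowerSeries ℤ)^(p * (m:ℕ)))^p)
      = PowerSeries.coeff (R := ℤ) d 1 := by
  rw [coeff_tprod _ (hfA p (by omega))]
  conv_lhs => rw [show (∏ i ∈ Finset.range d, ((1 : PowerSeries ℤ) - X^(p * ((pn i : ℕ))))^p)
    = 1 * (∏ i ∈ Finset.range d, ((1 : PowerSeries ℤ) - X^(p * ((pn i : ℕ))))^p) from (one_mul _).symm]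
  rw [coeff_mul_of_dvd]
  apply X_pow_dvd_prod_sub_one
  intro i _
  exact pow_fact _ _ _ (by have := pn_val i; nlinarith)

lemma hA4 (p : ℕ) (hp11 : 11 ≤ p) :
    (X : PowerSeries ℤ)^4 ∣ (∏' m : ℕ+, (1 - (X : PowerSeries ℤ)^(p * (m:ℕ)))^p) - 1 := by
  rw [PowerSeries.X_pow_dvd_iff]
  intro m hm
  rw [map_sub, coeffA p hp11 m (by omega), sub_self]

-- inverse of B
lemma hBu : IsUnit (∏' m : ℕ+, (1 - (X : PowerSeries ℤ)^((m:ℕ)))) := by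
  rw [PowerSeries.isUnit_iff_constantCoeff, ← PowerSeries.coeff_zero_eq_constantCoeff_apply, hb0]
  exact isUnit_one

lemma key_inv (j : ℕ) :
    ∑ k ∈ Finset.range (j+1), PowerSeries.coeff (R := ℤ) k (∏' m : ℕ+, (1 - (X : PowerSeries ℤ)^((m:ℕ))))
      * PowerSeries.coeff (R := ℤ) (j - k) (Ring.inverse (∏' m : ℕ+, (1 - (X : PowerSeries ℤ)^((m:ℕ)))))
      = PowerSeries.coeff (R := ℤ) j 1 := by
  conv_rhs => rw [← Ring.mul_inverse_cancel _ hBu]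
  rw [PowerSeries.coeff_mul, Finset.Nat.sum_antidiagonal_eq_sum_range_succ_mk]

lemma hi0 : PowerSeries.coeff (R := ℤ) 0 (Ring.inverse (∏' m : ℕ+, (1 - (X : PowerSeries ℤ)^((m:ℕ))))) = 1 := by
  have := key_inv 0
  simp only [Finset.sum_range_succ, Finset.sum_range_zero, hb0, coeff_one] at this
  simpa using this

lemma hi1 : PowerSeries.coeff (R := ℤ) 1 (Ring.inverse (∏' m : ℕ+, (1 - (X : PowerSeries ℤ)^((m:ℕ))))) = 1 := by
  have := key_inv 1
  simp only [Finset.sum_range_succ, Finset.sum_range_zero, coeff_one] at this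
  rw [show (1:ℕ) - 0 = 1 from rfl, show (1:ℕ) - 1 = 0 from rfl, hb0, hb1, hi0] at this
  norm_num at this
  linarith

lemma hi2 : PowerSeries.coeff (R := ℤ) 2 (Ring.inverse (∏' m : ℕ+, (1 - (X : PowerSeries ℤ)^((m:ℕ))))) = 2 := by
  have := key_inv 2
  simp only [Finset.sum_range_succ, Finset.sum_range_zero, coeff_one] at this
  rw [show (2:ℕ) - 0 = 2 from rfl, show (2:ℕ) - 1 = 1 from rfl, show (2:ℕ) - 2 = 0 from rfl,
    hb0, hb1, hb2, hi0, hi1] at this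
  norm_num at this
  linarith

lemma hi3 : PowerSeries.coeff (R := ℤ) 3 (Ring.inverse (∏' m : ℕ+, (1 - (X : PowerSeries ℤ)^((m:ℕ))))) = 3 := by
  have := key_inv 3
  simp only [Finset.sum_range_succ, Finset.sum_range_zero, coeff_one] at this
  rw [show (3:ℕ) - 0 = 3 from rfl, show (3:ℕ) - 1 = 2 from rfl, show (3:ℕ) - 2 = 1 from rfl,
    show (3:ℕ) - 3 = 0 from rfl, hb0, hb1, hb2, hb3, hi0, hi1, hi2] at this
  norm_num at this
  linarith


/-- The q-expansion `X^{(p²−1)/24} · ∏_{m=1}^∞ (1 − X^{pm})^p · (∏_{m=1}^∞ (1 − X^m))⁻¹`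
of the eta-product `η(pτ)^p/η(τ)`. -/
noncomputable def etaPhi (p : ℕ) : PowerSeries ℤ :=
  (X : PowerSeries ℤ) ^ ((p ^ 2 - 1) / 24) *
    (∏' m : ℕ+, (1 - (X : PowerSeries ℤ) ^ (p * (m : ℕ))) ^ p) *
    Ring.inverse (∏' m : ℕ+, (1 - (X : PowerSeries ℤ) ^ (m : ℕ)))

/-- `c p n`, the coefficient of `X^n` in the q-expansion of `η(pτ)^p/η(τ)`. -/
noncomputable def c (p n : ℕ) : ℤ := PowerSeries.coeff (R := ℤ) n (etaPhi p)

/-- `f : ℕ → ℂ` is a multiplicative arithmetic function: `f(1) = 1` and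
`f(jk) = f(j)f(k)` for coprime positive integers `j, k`. -/
def IsMultFn (f : ℕ → ℂ) : Prop :=
  f 1 = 1 ∧ ∀ j k : ℕ, 0 < j → 0 < k → Nat.Coprime j k → f (j * k) = f j * f k

lemma etaPhi_eq (p : ℕ) : etaPhi p =
    (X : PowerSeries ℤ) ^ ((p ^ 2 - 1) / 24) *
      ((∏' m : ℕ+, (1 - (X : PowerSeries ℤ) ^ (p * (m : ℕ))) ^ p) *
        Ring.inverse (∏' m : ℕ+, (1 - (X : PowerSeries ℤ) ^ (m : ℕ)))) := by
  rw [etaPhi, mul_assoc]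

lemma c_small (p m : ℕ) (hm : m < (p^2 - 1)/24) : c p m = 0 := by
  rw [c, etaPhi_eq, PowerSeries.coeff_X_pow_mul', if_neg (by omega)]

lemma c_big (p : ℕ) (hp11 : 11 ≤ p) (t : ℕ) (ht : t ≤ 3) :
    c p ((p^2 - 1)/24 + t)
      = PowerSeries.coeff (R := ℤ) t (Ring.inverse (∏' m : ℕ+, (1 - (X : PowerSeries ℤ)^((m:ℕ))))) := by
  rw [c, etaPhi_eq, add_comm, PowerSeries.coeff_X_pow_mul, mul_comm]
  exact coeff_mul_of_dvd _ _ t ((pow_dvd_pow X (by omega : t + 1 ≤ 4)).trans (hA4 p hp11))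

lemma c_big_pos (p : ℕ) (hp11 : 11 ≤ p) (t : ℕ) (ht : t ≤ 3) :
    0 < c p ((p^2 - 1)/24 + t) := by
  interval_cases t
  · rw [c_big p hp11 0 (by omega), hi0]; norm_num
  · rw [c_big p hp11 1 (by omega), hi1]; norm_num
  · rw [c_big p hp11 2 (by omega), hi2]; norm_num
  · rw [c_big p hp11 3 (by omega), hi3]; norm_num

/-- For a prime `p ≥ 11`, the Dirichlet series `L_{Φ_p}(s) = ∑ c(n) n^{−s}` attached to
`η(pτ)^p/η(τ)` admits no decomposition into a difference of two Euler products: there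
are no nonzero constant `a` and multiplicative functions `M, N` with
`c(n) = a(M(n) − N(n))` for all `n ≥ 1`. -/
theorem no_difference_decomposition (p : ℕ) (hp : p.Prime) (hp11 : 11 ≤ p) :
    ¬ ∃ (a : ℂ) (M N : ℕ → ℂ), a ≠ 0 ∧ IsMultFn M ∧ IsMultFn N ∧
      ∀ n : ℕ, 1 ≤ n → (c p n : ℂ) = a * (M n - N n) := by
  rintro ⟨a, M, N, ha, hM, hN, h⟩
  set v := (p^2 - 1)/24 with hv
  have hv5 : 5 ≤ v := by
    have h121 : 121 ≤ p^2 := by nlinarith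
    omega
  set t := (6 - v % 4) % 4 with htdef
  have ht3 : t ≤ 3 := by omega
  have hn2 : (v + t) % 4 = 2 := by omega
  set k := (v + t)/2 with hkdef
  have hk2 : v + t = 2 * k := by omega
  have hkodd : k % 2 = 1 := by omega
  have hk3 : 3 ≤ k := by omega
  have hkv : k < v := by omega
  -- M and N agree below v
  have agree : ∀ m : ℕ, 1 ≤ m → m < v → M m = N m := by
    intro m h1 h2
    have hc := h m h1
    rw [c_small p m h2] at hc
    have : a * (M m - N m) = 0 := by exact_mod_cast hc.symm
    rcases mul_eq_zero.mp this with h' | h'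
    · exact absurd h' ha
    · exact sub_eq_zero.mp h'
  have hM2 : M 2 = N 2 := agree 2 (by omega) (by omega)
  have hMk : M k = N k := agree k (by omega) hkv
  have hcop : Nat.Coprime 2 k := (Nat.prime_two.coprime_iff_not_dvd).mpr (by omega)
  have hzero : (c p (2 * k) : ℂ) = 0 := by
    rw [h (2 * k) (by omega), (hM.2 2 k (by omega) (by omega) hcop),
      (hN.2 2 k (by omega) (by omega) hcop), hM2, hMk]
    ring
  have hpos : 0 < c p (2 * k) := by
    rw [← hk2]
    exact c_big_pos p hp11 t ht3
  have : (c p (2 * k) : ℂ) ≠ 0 := by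
    exact_mod_cast (by omega : c p (2 * k) ≠ 0)
  exact this hzero
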